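/- Let p be an odd prime, a ∈ Z a quadratic non-residue modulo p, and f(x) = x_1² − a x_2² − p x_3² + a p x_4² on Q_p⁴. Then f is elliptic: f(x) = 0 if and only if x = 0. -/

import Mathlib

open MeasureTheory Complex Classical Filter

variable (p : ℕ) [Fact p.Prime]

noncomputable instance : MeasurableSpace ℚ_[p] := borel _
instance : BorelSpace ℚ_[p] := ⟨rfl⟩
noncomputable instance (n : ℕ) : MeasurableSpace (Fin n → ℚ_[p]) := borel _
instance (n : ℕ) : BorelSpace (Fin n → ℚ_[p]) := ⟨rfl⟩

/-- Haar measure on `ℚ_p` normalized so that `ℤ_p` (the closed unit ball) has measure 1. -/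
noncomputable def haarQ : Measure ℚ_[p] :=
  Measure.addHaarMeasure ⟨⟨Metric.closedBall 0 1, isCompact_closedBall 0 1⟩,
    ⟨0, mem_interior_iff_mem_nhds.2 (Metric.closedBall_mem_nhds 0 one_pos)⟩⟩

/-- Haar measure on `ℚ_p^n` normalized so that `ℤ_p^n` has measure 1. -/
noncomputable def haarQn (n : ℕ) : Measure (Fin n → ℚ_[p]) :=
  Measure.addHaarMeasure ⟨⟨Metric.closedBall 0 1, isCompact_closedBall 0 1⟩,
    ⟨0, mem_interior_iff_mem_nhds.2 (Metric.closedBall_mem_nhds 0 one_pos)⟩⟩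

/-- The p-adic fractional part of `x` : the unique rational of the form `z / p^n`
lying in `[0,1)` with `x - r ∈ ℤ_p`. -/
noncomputable def padicFract (x : ℚ_[p]) : ℚ :=
  if h : ∃ r : ℚ, (∃ (z : ℤ) (n : ℕ), r = (z : ℚ) / (p : ℚ) ^ n) ∧ 0 ≤ r ∧ r < 1 ∧
      ‖x - (r : ℚ_[p])‖ ≤ 1 then h.choose else 0

/-- The standard additive character `χ(y) = exp(2 π i {y}_p)` of `ℚ_p`. -/
noncomputable def stdChar (y : ℚ_[p]) : ℂ :=
  Complex.exp (2 * Real.pi * Complex.I * (padicFract p y : ℂ))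

/-- A Bruhat–Schwartz (test) function: locally constant with compact support. -/
def IsBruhatSchwartz {E : Type*} [TopologicalSpace E] (φ : E → ℂ) : Prop :=
  IsLocallyConstant φ ∧ HasCompactSupport φ

/-- Fourier transform on `ℚ_p`. -/
noncomputable def fourier1 (φ : ℚ_[p] → ℂ) (ξ : ℚ_[p]) : ℂ :=
  ∫ x, stdChar p (-(ξ * x)) * φ x ∂haarQ p

/-- Fourier transform on `ℚ_p^n`. -/
noncomputable def fourierN (n : ℕ) (φ : (Fin n → ℚ_[p]) → ℂ) (ξ : Fin n → ℚ_[p]) : ℂ :=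
  ∫ x, stdChar p (-(∑ i, ξ i * x i)) * φ x ∂haarQn p n

/-- Inverse Fourier transform on `ℚ_p^n`. -/
noncomputable def fourierInvN (n : ℕ) (φ : (Fin n → ℚ_[p]) → ℂ) (x : Fin n → ℚ_[p]) : ℂ :=
  ∫ ξ, stdChar p (∑ i, x i * ξ i) * φ ξ ∂haarQn p n

/-- The elliptic quadratic form `f(x) = x₁² - a x₂² - p x₃² + a p x₄²`. -/
noncomputable def Qf (a : ℤ) (x : Fin 4 → ℚ_[p]) : ℚ_[p] :=
  x 0 ^ 2 - (a : ℚ_[p]) * x 1 ^ 2 - (p : ℚ_[p]) * x 2 ^ 2 + (a : ℚ_[p]) * (p : ℚ_[p]) * x 3 ^ 2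

/-- The dual elliptic quadratic form `f°(x) = a p x₁² - p x₂² - a x₃² + x₄²`. -/
noncomputable def QfCirc (a : ℤ) (x : Fin 4 → ℚ_[p]) : ℚ_[p] :=
  (a : ℚ_[p]) * (p : ℚ_[p]) * x 0 ^ 2 - (p : ℚ_[p]) * x 1 ^ 2 - (a : ℚ_[p]) * x 2 ^ 2 + x 3 ^ 2

lemma aux_not_dvd (p : ℕ) [Fact p.Prime] (a : ℤ) (ha : legendreSym p a = -1) :
    (a : ZMod p) ≠ 0 := by
  intro h
  rw [(legendreSym.eq_zero_iff p a).mpr h] at ha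
  exact absurd ha (by norm_num)

lemma aux_norm_a (p : ℕ) [Fact p.Prime] (a : ℤ) (ha : legendreSym p a = -1) :
    ‖(a : ℚ_[p])‖ = 1 := by
  refine le_antisymm (Padic.norm_int_le_one a) ?_
  by_contra hlt
  push_neg at hlt
  have := Padic.norm_intCast_lt_one_iff.mp hlt
  exact aux_not_dvd p a ha ((ZMod.intCast_zmod_eq_zero_iff_dvd a p).mpr this)

lemma aux_unit (p : ℕ) [Fact p.Prime] (a : ℤ) (ha : legendreSym p a = -1)
    (t : ℤ_[p]) (ht : ‖t‖ = 1) : ‖t ^ 2 - (a : ℤ_[p])‖ = 1 := by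
  refine le_antisymm (PadicInt.norm_le_one _) ?_
  by_contra hlt
  push_neg at hlt
  obtain ⟨y, hy⟩ := (PadicInt.norm_lt_one_iff_dvd _).mp hlt
  have h2 := congrArg (PadicInt.toZMod) hy
  simp only [map_sub, map_pow, map_intCast, map_mul, map_natCast, ZMod.natCast_self,
    zero_mul] at h2
  have hsq : IsSquare ((a : ZMod p)) := ⟨PadicInt.toZMod t, by
    have h3 : (a : ZMod p) = (PadicInt.toZMod t) ^ 2 := by
      have := sub_eq_zero.mp h2; exact this.symm
    rw [h3]; ring⟩
  exact (legendreSym.eq_neg_one_iff p).mp ha hsq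

lemma aux_norm_key (p : ℕ) [Fact p.Prime] (a : ℤ) (ha : legendreSym p a = -1)
    (u v : ℚ_[p]) : ‖u ^ 2 - (a : ℚ_[p]) * v ^ 2‖ = max ‖u‖ ‖v‖ ^ 2 := by
  have hna : ‖(a : ℚ_[p])‖ = 1 := aux_norm_a p a ha
  have hu2 : ‖u ^ 2‖ = ‖u‖ ^ 2 := norm_pow u 2
  have hv2 : ‖(a : ℚ_[p]) * v ^ 2‖ = ‖v‖ ^ 2 := by
    rw [norm_mul, hna, one_mul, norm_pow]
  rcases eq_or_ne ‖u‖ ‖v‖ with heq | hne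
  · -- equal norms
    rcases eq_or_ne v 0 with rfl | hv
    · have : u = 0 := norm_eq_zero.mp (by simpa using heq)
      simp [this]
    · set t : ℚ_[p] := u / v with htdef
      have ht : ‖t‖ = 1 := by
        rw [htdef, norm_div, heq, div_self (norm_ne_zero_iff.mpr hv)]
      have htu : u = t * v := by rw [htdef, div_mul_cancel₀ u hv]
      have hfac : u ^ 2 - (a : ℚ_[p]) * v ^ 2 = (t ^ 2 - (a : ℚ_[p])) * v ^ 2 := by
        rw [htu]; ring
      have hle : ‖t‖ ≤ 1 := le_of_eq ht
      set T : ℤ_[p] := ⟨t, hle⟩ with hT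
      have hTn : ‖(T : ℚ_[p])‖ = ‖t‖ := rfl
      have h1 : ‖t ^ 2 - (a : ℚ_[p])‖ = 1 := by
        have := aux_unit p a ha T (by rw [PadicInt.norm_def, hTn, ht])
        rw [PadicInt.norm_def] at this
        have hc : ((T ^ 2 - (a : ℤ_[p]) : ℤ_[p]) : ℚ_[p]) = t ^ 2 - (a : ℚ_[p]) := by
          push_cast [hT]; rfl
        rwa [hc] at this
      rw [hfac, norm_mul, h1, one_mul, norm_pow, ← heq, max_self]
  · -- distinct norms
    have hne2 : ‖u ^ 2‖ ≠ ‖-( (a : ℚ_[p]) * v ^ 2)‖ := by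
      rw [norm_neg, hu2, hv2]
      intro h
      exact hne (by nlinarith [norm_nonneg u, norm_nonneg v])
    rw [sub_eq_add_neg, Padic.add_eq_max_of_ne hne2, norm_neg, hu2, hv2]
    rcases le_total ‖u‖ ‖v‖ with h | h
    · rw [max_eq_right h, max_eq_right (by nlinarith [norm_nonneg u] : ‖u‖ ^ 2 ≤ ‖v‖ ^ 2)]
    · rw [max_eq_left h, max_eq_left (by nlinarith [norm_nonneg v] : ‖v‖ ^ 2 ≤ ‖u‖ ^ 2)]

/-- The quadratic form `f(x) = x₁² - a x₂² - p x₃² + a p x₄²`, with `a` a quadratic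
non-residue mod `p`, is elliptic: `f(x) = 0 ↔ x = 0`. -/
theorem Qf_elliptic (p : ℕ) [Fact p.Prime] (hp : p ≠ 2)
    (a : ℤ) (ha : legendreSym p a = -1) :
    ∀ x : Fin 4 → ℚ_[p], Qf p a x = 0 ↔ x = 0 := by
  intro x
  constructor
  · intro h0
    have key : x 0 ^ 2 - (a : ℚ_[p]) * x 1 ^ 2
        = (p : ℚ_[p]) * (x 2 ^ 2 - (a : ℚ_[p]) * x 3 ^ 2) := by
      unfold Qf at h0; linear_combination h0
    have hn : ‖x 0 ^ 2 - (a : ℚ_[p]) * x 1 ^ 2‖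
        = ‖(p : ℚ_[p]) * (x 2 ^ 2 - (a : ℚ_[p]) * x 3 ^ 2)‖ := by rw [key]
    rw [aux_norm_key p a ha, norm_mul, aux_norm_key p a ha, Padic.norm_p] at hn
    have hp1 : (1 : ℝ) < p := by exact_mod_cast (Fact.out : p.Prime).one_lt
    have hppos : (0 : ℝ) < p := lt_trans one_pos hp1
    have hM2 : max ‖x 2‖ ‖x 3‖ = 0 := by
      by_contra hm2
      have hpos2 : 0 < max ‖x 2‖ ‖x 3‖ :=
        lt_of_le_of_ne (le_trans (norm_nonneg _) (le_max_left _ _)) (Ne.symm hm2)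
      have hpos1 : 0 < max ‖x 0‖ ‖x 1‖ := by
        have h0' : 0 ≤ max ‖x 0‖ ‖x 1‖ := le_trans (norm_nonneg _) (le_max_left _ _)
        rcases h0'.lt_or_eq with h | h
        · exact h
        · exfalso
          rw [← h] at hn
          nlinarith [pow_pos hpos2 2, inv_pos.mpr hppos]
      have e1 : ∃ m : ℤ, max ‖x 0‖ ‖x 1‖ = (p : ℝ) ^ m := by
        rcases max_choice ‖x 0‖ ‖x 1‖ with h | h <;> rw [h] at hpos1 ⊢
        · exact ⟨-(x 0).valuation, Padic.norm_eq_zpow_neg_valuation (norm_pos_iff.mp hpos1)⟩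
        · exact ⟨-(x 1).valuation, Padic.norm_eq_zpow_neg_valuation (norm_pos_iff.mp hpos1)⟩
      have e2 : ∃ n : ℤ, max ‖x 2‖ ‖x 3‖ = (p : ℝ) ^ n := by
        rcases max_choice ‖x 2‖ ‖x 3‖ with h | h <;> rw [h] at hpos2 ⊢
        · exact ⟨-(x 2).valuation, Padic.norm_eq_zpow_neg_valuation (norm_pos_iff.mp hpos2)⟩
        · exact ⟨-(x 3).valuation, Padic.norm_eq_zpow_neg_valuation (norm_pos_iff.mp hpos2)⟩
      obtain ⟨m, hm⟩ := e1
      obtain ⟨n, hn2⟩ := e2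
      rw [hm, hn2] at hn
      have hzz : (p : ℝ) ^ (m * 2) = (p : ℝ) ^ (-1 + n * 2) := by
        rw [zpow_add₀ (ne_of_gt hppos), zpow_mul, zpow_mul, zpow_neg_one, zpow_two, zpow_two]
        rw [pow_two, pow_two] at hn
        linarith [hn]
      have := (zpow_right_inj₀ hppos (ne_of_gt hp1)).mp hzz
      omega
    have h2 : x 2 = 0 := norm_eq_zero.mp
      (le_antisymm (le_trans (le_max_left _ _) hM2.le) (norm_nonneg _))
    have h3 : x 3 = 0 := norm_eq_zero.mp
      (le_antisymm (le_trans (le_max_right _ _) hM2.le) (norm_nonneg _))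
    rw [hM2] at hn
    have hM1 : max ‖x 0‖ ‖x 1‖ = 0 := by
      have h0' : 0 ≤ max ‖x 0‖ ‖x 1‖ := le_trans (norm_nonneg _) (le_max_left _ _)
      nlinarith
    have h0a : x 0 = 0 := norm_eq_zero.mp
      (le_antisymm (le_trans (le_max_left _ _) hM1.le) (norm_nonneg _))
    have h1a : x 1 = 0 := norm_eq_zero.mp
      (le_antisymm (le_trans (le_max_right _ _) hM1.le) (norm_nonneg _))
    funext i
    fin_cases i <;> simp [h0a, h1a, h2, h3]
  · rintro rfl
    simp [Qf]
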